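/- Let n ≥ 1 be an integer. Define on ℝ³ \ {0} the degree-zero homogeneous functions X̂(y) = y₃/‖y‖ and Ŷ(y) = Re((y₁ + i y₂)^n)/‖y‖^n. Then for every x ∈ ℝ³ with ‖x‖ = 1: (i) ΔX̂(x) = -2 x₃ and ΔŶ(x) = -n(n+1) Ŷ(x); (ii) ⟪∇X̂(x), ∇Ŷ(x)⟫ = -n x₃ Ŷ(x); (iii) ‖∇Ŷ(x)‖² = n²( (1 - x₃²)^{n-1} - Ŷ(x)² ). Consequently the spherical Laplacian on S² restricted to functions of (X, Y) = (x₃, Re((x₁+ix₂)^n)) is the polynomial model with Γ(X,X) = 1-X², Γ(X,Y) = -nXY, Γ(Y,Y) = n²((1-X²)^{n-1} - Y²), L(X) = -2X, L(Y) = -n(n+1)Y. -/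

import Mathlib

open RealInnerProductSpace

/-- The Euclidean Laplacian on `ℝ³`: the sum of the second partial derivatives. -/
noncomputable def lap3 (f : EuclideanSpace ℝ (Fin 3) → ℝ)
    (x : EuclideanSpace ℝ (Fin 3)) : ℝ :=
  ∑ i, fderiv ℝ (fun y => fderiv ℝ f y (EuclideanSpace.single i 1)) x
    (EuclideanSpace.single i 1)

noncomputable section
namespace S19

abbrev E3 := EuclideanSpace ℝ (Fin 3)

def C3 : E3 →L[ℝ] ℂ :=
  Complex.ofRealCLM.comp (EuclideanSpace.proj 0) +
    Complex.I • Complex.ofRealCLM.comp (EuclideanSpace.proj 1)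

lemma C3_apply (y : E3) : C3 y = (y 0 : ℂ) + Complex.I * (y 1 : ℂ) := by
  simp [C3, smul_eq_mul]

lemma hasFDerivAt_coord (i : Fin 3) (y : E3) :
    HasFDerivAt (fun z : E3 => z i) (EuclideanSpace.proj (𝕜 := ℝ) i) y :=
  (EuclideanSpace.proj (𝕜 := ℝ) i).hasFDerivAt

lemma hasFDerivAt_norm3 (y : E3) (hy : y ≠ 0) :
    HasFDerivAt (fun z : E3 => ‖z‖) ((‖y‖)⁻¹ • innerSL ℝ y) y := by
  have h0 : (0:ℝ) < ‖y‖ := norm_pos_iff.mpr hy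
  have hinner : HasFDerivAt (fun z : E3 => ⟪z, z⟫)
      ((fderivInnerCLM ℝ (y, y)).comp ((ContinuousLinearMap.id ℝ E3).prod
        (ContinuousLinearMap.id ℝ E3))) y :=
    (hasFDerivAt_id y).inner ℝ (hasFDerivAt_id y)
  have hne : ⟪y, y⟫ ≠ 0 := by
    rw [real_inner_self_eq_norm_sq]; positivity
  have h := (Real.hasDerivAt_sqrt hne).comp_hasFDerivAt (f := fun z : E3 => ⟪z, z⟫) y hinner
  have heq : (fun z : E3 => Real.sqrt ⟪z, z⟫) = fun z : E3 => ‖z‖ := by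
    funext z
    rw [real_inner_self_eq_norm_sq, Real.sqrt_sq (norm_nonneg z)]
  rw [show ((fun x => Real.sqrt x) ∘ fun z : E3 => ⟪z, z⟫) = fun z : E3 => ‖z‖ from heq] at h
  refine h.congr_fderiv ?_
  ext v
  rw [real_inner_self_eq_norm_sq, Real.sqrt_sq (norm_nonneg y)]
  simp [fderivInnerCLM_apply, real_inner_comm]
  field_simp
  have h2 : ∀ (w u : E3), ∑ i, w i * u i = ∑ i, u i * w i := by
    intro w u; exact Finset.sum_congr rfl fun i _ => mul_comm _ _
  ring

lemma keyC (m : ℕ) (d : ℂ) (y : E3) :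
    HasFDerivAt (fun z : E3 => (d * (C3 z) ^ m).re)
      (Complex.reCLM.comp ((d * m * (C3 y) ^ (m - 1)) • C3)) y := by
  have hpow := (hasDerivAt_pow m (C3 y)).comp_hasFDerivAt (f := fun z : E3 => C3 z) y
    C3.hasFDerivAt
  have hmul := hpow.const_mul d
  have := Complex.reCLM.hasFDerivAt.comp y hmul
  refine this.congr_fderiv ?_
  ext v
  simp [mul_comm, mul_assoc, mul_left_comm]

lemma keyR (m : ℕ) (hm : 1 ≤ m) (y : E3) (hy : y ≠ 0) :
    HasFDerivAt (fun z : E3 => (‖z‖ ^ m)⁻¹)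
      ((-((m : ℝ) * (‖y‖ ^ (m + 2))⁻¹)) • innerSL ℝ y) y := by
  have h0 : (0:ℝ) < ‖y‖ := norm_pos_iff.mpr hy
  have hpow := (hasDerivAt_pow m ‖y‖).comp_hasFDerivAt (f := fun z : E3 => ‖z‖) y
    (hasFDerivAt_norm3 y hy)
  have hne : ‖y‖ ^ m ≠ 0 := by positivity
  have hinv := (hasDerivAt_inv hne).comp_hasFDerivAt (f := fun z : E3 => ‖z‖ ^ m) y hpow
  refine hinv.congr_fderiv ?_
  ext v
  simp only [ContinuousLinearMap.coe_smul', Pi.smul_apply, smul_eq_mul]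
  have hpw : ‖y‖ ^ (m - 1) * ‖y‖ ^ (m + 2) = (‖y‖ ^ m) ^ 2 * ‖y‖ := by
    rw [← pow_add, ← pow_mul, ← pow_succ]
    congr 1
    omega
  simp only [innerSL_apply_apply]
  field_simp
  linear_combination (-⟪y, v⟫) * hpw

/-- first derivative of X -/
def FX (y : E3) : E3 →L[ℝ] ℝ :=
  y 2 • ((-(((1:ℕ) : ℝ) * (‖y‖ ^ (1 + 2))⁻¹)) • innerSL ℝ y) +
    (‖y‖ ^ 1)⁻¹ • (EuclideanSpace.proj (𝕜 := ℝ) 2)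

lemma hX' (y : E3) (hy : y ≠ 0) :
    HasFDerivAt (fun z : E3 => z 2 * (‖z‖ ^ 1)⁻¹) (FX y) y :=
  (hasFDerivAt_coord 2 y).mul (keyR 1 le_rfl y hy)

/-- first derivative of Y -/
def FY (n : ℕ) (y : E3) : E3 →L[ℝ] ℝ :=
  ((1 : ℂ) * (C3 y) ^ n).re • ((-((n : ℝ) * (‖y‖ ^ (n + 2))⁻¹)) • innerSL ℝ y) +
    (‖y‖ ^ n)⁻¹ • (Complex.reCLM.comp ((1 * (n : ℂ) * (C3 y) ^ (n - 1)) • C3))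

lemma hY' (n : ℕ) (hn : 1 ≤ n) (y : E3) (hy : y ≠ 0) :
    HasFDerivAt (fun z : E3 => ((1 : ℂ) * (C3 z) ^ n).re * (‖z‖ ^ n)⁻¹) (FY n y) y :=
  (keyC n 1 y).mul (keyR n hn y hy)

lemma FX_single (y : E3) (i : Fin 3) :
    FX y (EuclideanSpace.single i 1) =
      (if (2 : Fin 3) = i then 1 else 0) * (‖y‖ ^ 1)⁻¹ +
        y 2 * y i * (-(((1:ℕ) : ℝ) * (‖y‖ ^ 3)⁻¹)) := by
  simp [FX, EuclideanSpace.inner_single_right, EuclideanSpace.single_apply]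
  ring

lemma FY_single (n : ℕ) (y : E3) (i : Fin 3) :
    FY n y (EuclideanSpace.single i 1) =
      ((1 : ℂ) * (C3 y) ^ n).re * (-((n : ℝ) * (‖y‖ ^ (n + 2))⁻¹)) * y i +
        (‖y‖ ^ n)⁻¹ * ((1 * (n : ℂ) * C3 (EuclideanSpace.single i 1)) * (C3 y) ^ (n - 1)).re := by
  simp [FY, EuclideanSpace.inner_single_right]
  ring

lemma fderiv_swap (f : E3 → ℝ) (F : E3 → (E3 →L[ℝ] ℝ))
    (hF : ∀ y : E3, y ≠ 0 → HasFDerivAt f (F y) y) (x : E3) (hx : x ≠ 0) (v : E3) :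
    fderiv ℝ (fun y => fderiv ℝ f y v) x = fderiv ℝ (fun y => F y v) x := by
  apply Filter.EventuallyEq.fderiv_eq
  filter_upwards [isOpen_compl_singleton.mem_nhds
    (Set.mem_compl_singleton_iff.mpr hx)] with y hy
  rw [(hF y hy).fderiv]

lemma lapX (x : E3) (hx : ‖x‖ = 1)
    (hsum : x 0 ^ 2 + x 1 ^ 2 + x 2 ^ 2 = 1) :
    lap3 (fun z : E3 => z 2 * (‖z‖ ^ 1)⁻¹) x = -2 * x 2 := by
  have hx0 : x ≠ 0 := by
    intro h; rw [h] at hx; simp at hx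
  have h3 : (1:ℕ) ≤ 3 := by norm_num
  have hD3 := ((keyR 3 h3 x hx0).const_mul (((1:ℕ) : ℝ))).neg
  have hg : ∀ i : Fin 3, (fun y : E3 => FX y (EuclideanSpace.single i 1)) =
      fun y : E3 => (if (2 : Fin 3) = i then (1:ℝ) else 0) * (‖y‖ ^ 1)⁻¹ +
        y 2 * y i * (-(((1:ℕ) : ℝ) * (‖y‖ ^ 3)⁻¹)) :=
    fun i => funext fun y => FX_single y i
  have Hi : ∀ i : Fin 3, HasFDerivAt
      (fun y : E3 => (if (2 : Fin 3) = i then (1:ℝ) else 0) * (‖y‖ ^ 1)⁻¹ +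
        y 2 * y i * (-(((1:ℕ) : ℝ) * (‖y‖ ^ 3)⁻¹))) _ x :=
    fun i => ((keyR 1 le_rfl x hx0).const_mul _).add
      (((hasFDerivAt_coord 2 x).mul (hasFDerivAt_coord i x)).mul hD3)
  rw [lap3, Fin.sum_univ_three]
  rw [fderiv_swap _ _ hX' x hx0, fderiv_swap _ _ hX' x hx0, fderiv_swap _ _ hX' x hx0,
    hg 0, hg 1, hg 2, (Hi 0).fderiv, (Hi 1).fderiv, (Hi 2).fderiv]
  simp [EuclideanSpace.inner_single_right, EuclideanSpace.single_apply, hx]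
  linear_combination (3 * x 2) * hsum

lemma lapY (n : ℕ) (hn : 1 ≤ n) (x : E3) (hx : ‖x‖ = 1)
    (hsum : x 0 ^ 2 + x 1 ^ 2 + x 2 ^ 2 = 1) :
    lap3 (fun z : E3 => ((1 : ℂ) * (C3 z) ^ n).re * (‖z‖ ^ n)⁻¹) x =
      -((n : ℝ) * (n + 1)) * ((C3 x) ^ n).re := by
  have hx0 : x ≠ 0 := by intro h; rw [h] at hx; simp at hx
  have hc0 : C3 (EuclideanSpace.single 0 1) = 1 := by
    rw [C3_apply]; simp [EuclideanSpace.single_apply]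
  have hc1 : C3 (EuclideanSpace.single 1 1) = Complex.I := by
    rw [C3_apply]; simp [EuclideanSpace.single_apply]
  have hc2 : C3 (EuclideanSpace.single 2 1) = 0 := by
    rw [C3_apply]; simp [EuclideanSpace.single_apply]
  have hn2 : 1 ≤ n + 2 := by omega
  have hB := ((keyR (n+2) hn2 x hx0).const_mul ((n:ℝ))).neg
  have hg : ∀ i : Fin 3, (fun y : E3 => FY n y (EuclideanSpace.single i 1)) =
      fun y : E3 => ((1 : ℂ) * (C3 y) ^ n).re * (-((n : ℝ) * (‖y‖ ^ (n + 2))⁻¹)) * y i +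
        (‖y‖ ^ n)⁻¹ * ((1 * (n : ℂ) * C3 (EuclideanSpace.single i 1)) * (C3 y) ^ (n - 1)).re :=
    fun i => funext fun y => FY_single n y i
  have Hi : ∀ i : Fin 3, HasFDerivAt
      (fun y : E3 => ((1 : ℂ) * (C3 y) ^ n).re * (-((n : ℝ) * (‖y‖ ^ (n + 2))⁻¹)) * y i +
        (‖y‖ ^ n)⁻¹ * ((1 * (n : ℂ) * C3 (EuclideanSpace.single i 1)) * (C3 y) ^ (n - 1)).re) _ x :=
    fun i => (((keyC n 1 x).mul hB).mul (hasFDerivAt_coord i x)).add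
      ((keyR n hn x hx0).mul (keyC (n-1) (1 * (n : ℂ) * C3 (EuclideanSpace.single i 1)) x))
  rw [lap3, Fin.sum_univ_three]
  rw [fderiv_swap _ _ (hY' n hn) x hx0, fderiv_swap _ _ (hY' n hn) x hx0,
    fderiv_swap _ _ (hY' n hn) x hx0,
    hg 0, hg 1, hg 2, (Hi 0).fderiv, (Hi 1).fderiv, (Hi 2).fderiv]
  simp [EuclideanSpace.inner_single_right, EuclideanSpace.single_apply, hx, hc0, hc1, hc2]
  set z := C3 x with hzdef
  have hre : z.re = x 0 := by rw [hzdef, C3_apply]; simp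
  have him : z.im = x 1 := by rw [hzdef, C3_apply]; simp
  have hz1 : z ^ (n-1) * z = z ^ n := by
    rw [← pow_succ]; congr 1; omega
  have ha : (z ^ (n-1)).re * x 0 - (z ^ (n-1)).im * x 1 = (z ^ n).re := by
    rw [← hre, ← him, ← Complex.mul_re, hz1]
  linear_combination ((n:ℝ) * (2 + n) * (z ^ n).re) * hsum - 2 * (n:ℝ)^2 * ha

lemma gradX (x : E3) (hx : ‖x‖ = 1) (hx0 : x ≠ 0) :
    HasGradientAt (fun z : E3 => z 2 * (‖z‖ ^ 1)⁻¹)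
      (EuclideanSpace.single 2 (1:ℝ) - x 2 • x) x := by
  rw [hasGradientAt_iff_hasFDerivAt]
  refine (hX' x hx0).congr_fderiv ?_
  ext v
  rw [InnerProductSpace.toDual_apply_apply]
  simp [FX, EuclideanSpace.inner_single_right, inner_sub_left, real_inner_smul_left,
    EuclideanSpace.inner_single_left, hx, PiLp.inner_apply, Fin.sum_univ_three,
    EuclideanSpace.single_apply, PiLp.sub_apply, PiLp.smul_apply]
  ring

lemma gradY (n : ℕ) (hn : 1 ≤ n) (x : E3) (hx : ‖x‖ = 1) (hx0 : x ≠ 0) :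
    HasGradientAt (fun z : E3 => ((1 : ℂ) * (C3 z) ^ n).re * (‖z‖ ^ n)⁻¹)
      (EuclideanSpace.single 0 ((n:ℝ) * ((C3 x) ^ (n-1)).re) +
        EuclideanSpace.single 1 (-(n:ℝ) * ((C3 x) ^ (n-1)).im) -
        ((n:ℝ) * ((C3 x) ^ n).re) • x) x := by
  rw [hasGradientAt_iff_hasFDerivAt]
  refine (hY' n hn x hx0).congr_fderiv ?_
  ext v
  rw [InnerProductSpace.toDual_apply_apply]
  have hv : C3 v = (v 0 : ℂ) + Complex.I * (v 1 : ℂ) := C3_apply v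
  simp [FY, EuclideanSpace.inner_single_right, inner_sub_left, inner_add_left,
    real_inner_smul_left, EuclideanSpace.inner_single_left, hx, PiLp.inner_apply,
    Fin.sum_univ_three, EuclideanSpace.single_apply, PiLp.sub_apply, PiLp.smul_apply,
    PiLp.add_apply, hv, Complex.mul_re, Complex.mul_im]
  ring

end S19
end


/-- For `n ≥ 1`, the degree-zero homogeneous functions `X̂(y) = y₃/‖y‖` and
`Ŷ(y) = Re((y₁ + i y₂)^n)/‖y‖^n` on `ℝ³ \ {0}` satisfy, at every `x` with `‖x‖ = 1`:
`ΔX̂ = -2x₃`, `ΔŶ = -n(n+1)Ŷ`, `⟪∇X̂, ∇Ŷ⟫ = -n x₃ Ŷ` and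
`‖∇Ŷ‖² = n²((1-x₃²)^{n-1} - Ŷ²)`: the spherical model of the sphere cut along `n`
meridians. -/
theorem stmt_19 (n : ℕ) (hn : 1 ≤ n)
    (X Y : EuclideanSpace ℝ (Fin 3) → ℝ)
    (hX : X = fun y => y 2 / ‖y‖)
    (hY : Y = fun y => (((y 0 : ℂ) + Complex.I * (y 1 : ℂ)) ^ n).re / ‖y‖ ^ n)
    (x : EuclideanSpace ℝ (Fin 3)) (hx : ‖x‖ = 1) :
    lap3 X x = -2 * x 2 ∧
    lap3 Y x = -((n : ℝ) * (n + 1)) * Y x ∧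
    ⟪gradient X x, gradient Y x⟫ = -(n : ℝ) * x 2 * Y x ∧
    ‖gradient Y x‖ ^ 2 = (n : ℝ) ^ 2 * ((1 - x 2 ^ 2) ^ (n - 1) - Y x ^ 2) := by
  have hx0 : x ≠ 0 := by intro h; rw [h] at hx; simp at hx
  have hsum : x 0 ^ 2 + x 1 ^ 2 + x 2 ^ 2 = 1 := by
    have h := hx
    rw [EuclideanSpace.norm_eq] at h
    have h2 : (∑ i, ‖x i‖ ^ 2) = 1 := by
      have h4 := Real.sq_sqrt (Finset.sum_nonneg fun i (_ : i ∈ Finset.univ) => sq_nonneg ‖x i‖)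
      rw [← h4, h]; norm_num
    simpa [Fin.sum_univ_three, Real.norm_eq_abs, sq_abs] using h2
  have hXf : X = fun z : S19.E3 => z 2 * (‖z‖ ^ 1)⁻¹ := by
    rw [hX]; funext y; rw [pow_one, div_eq_mul_inv]
  have hYf : Y = fun z : S19.E3 => ((1 : ℂ) * (S19.C3 z) ^ n).re * (‖z‖ ^ n)⁻¹ := by
    rw [hY]; funext y; rw [S19.C3_apply, one_mul, div_eq_mul_inv]
  set z := S19.C3 x with hzdef
  have hre : z.re = x 0 := by rw [hzdef, S19.C3_apply]; simp
  have him : z.im = x 1 := by rw [hzdef, S19.C3_apply]; simp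
  have hz1 : z ^ (n-1) * z = z ^ n := by rw [← pow_succ]; congr 1; omega
  have ha : (z ^ (n-1)).re * x 0 - (z ^ (n-1)).im * x 1 = (z ^ n).re := by
    rw [← hre, ← him, ← Complex.mul_re, hz1]
  have hYx : Y x = (z ^ n).re := by rw [hYf]; simp [hx]; rfl
  have hgX := (S19.gradX x hx hx0).gradient
  have hgY := (S19.gradY n hn x hx hx0).gradient
  have hpq : (z ^ (n-1)).re ^ 2 + (z ^ (n-1)).im ^ 2 = (1 - x 2 ^ 2) ^ (n-1) := by
    have h1 : Complex.normSq z = x 0 ^ 2 + x 1 ^ 2 := by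
      rw [Complex.normSq_apply, hre, him]; ring
    have h2 : Complex.normSq (z ^ (n-1)) = (x 0 ^ 2 + x 1 ^ 2) ^ (n-1) := by
      rw [map_pow, h1]
    have h3 : (1 : ℝ) - x 2 ^ 2 = x 0 ^ 2 + x 1 ^ 2 := by linarith
    rw [h3, ← h2, Complex.normSq_apply]; ring
  refine ⟨?_, ?_, ?_, ?_⟩
  · rw [hXf]; exact S19.lapX x hx hsum
  · rw [hYx, hYf]; exact S19.lapY n hn x hx hsum
  · rw [hYx, hXf, hYf, hgX, hgY]
    simp [PiLp.inner_apply, Fin.sum_univ_three, EuclideanSpace.single_apply,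
      PiLp.sub_apply, PiLp.smul_apply, PiLp.add_apply]
    linear_combination (-(n:ℝ) * x 2) * ha + ((n:ℝ) * (z ^ n).re * x 2) * hsum
  · rw [hYx, hYf, hgY, EuclideanSpace.norm_eq,
      Real.sq_sqrt (Finset.sum_nonneg fun i _ => sq_nonneg _)]
    simp [Fin.sum_univ_three, EuclideanSpace.single_apply, Real.norm_eq_abs, sq_abs,
      PiLp.sub_apply, PiLp.smul_apply, PiLp.add_apply]
    linear_combination (n:ℝ)^2 * hpq - (2 * (n:ℝ)^2 * (z ^ n).re) * ha +
      ((n:ℝ)^2 * (z ^ n).re ^ 2) * hsum
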